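/- arXiv:math/0009230 — 2 statements merged into one kernel-verified Lean document; each statement's English description precedes it below -/
import Mathlib

section
/- Let n be a positive integer, j₁, j₂ ∈ Z_n, and positive integers b₁, a₁, b₂ with b₁ + a₁ < n/2 and b₂ < n/2. Suppose j₂ ⪯ j₁ - b₁ (circular relation on Z_n) and j₂ ≺ j₁. Then the sets {j₁ - x mod n : 0 ≤ x ≤ b₁ - 1} and {j₂ - y mod n : 1 ≤ y ≤ b₂} are disjoint. -/
/-- The circular relation on `ZMod n`: `i ⪯ j` iff `(j - i) mod n ∈ {0, ..., ⌊n/2⌋}`. -/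
def crel (n : ℕ) (i j : ZMod n) : Prop := (j - i).val ≤ n / 2

/-- Index-set disjointness underlying Proposition 6(iv): if `j₂ ⪯ j₁ - b₁` and `j₂ ≺ j₁`,
then `{j₁ - x : 0 ≤ x ≤ b₁ - 1}` and `{j₂ - y : 1 ≤ y ≤ b₂}` are disjoint. -/
theorem stmt_4 (n : ℕ) (hn : 0 < n) (j₁ j₂ : ZMod n) (b₁ a₁ b₂ : ℕ)
    (hb₁ : 0 < b₁) (ha₁ : 0 < a₁) (hb₂ : 0 < b₂)
    (h1 : 2 * (b₁ + a₁) < n) (h2 : 2 * b₂ < n)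
    (hpre : crel n j₂ (j₁ - (b₁ : ZMod n)))
    (hlt : crel n j₂ j₁ ∧ j₂ ≠ j₁) :
    ∀ x y : ℕ, x ≤ b₁ - 1 → 1 ≤ y → y ≤ b₂ →
      j₁ - (x : ZMod n) ≠ j₂ - (y : ZMod n) := by
  intro x y hx hy1 hy2 heq
  haveI : NeZero n := ⟨hn.ne'⟩
  obtain ⟨hle, hne⟩ := hlt
  have key : j₁ - j₂ = (x : ZMod n) - (y : ZMod n) := by linear_combination heq
  have hd : (j₁ - j₂).val ≤ n / 2 := hle
  have hdne : (j₁ - j₂).val ≠ 0 := by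
    rw [Ne, ZMod.val_eq_zero, sub_eq_zero]
    exact fun h => hne h.symm
  rcases le_or_gt y x with hxy | hxy
  · have hxy' : x - y < n := by omega
    have hval : (j₁ - j₂).val = x - y := by
      rw [key, ← Nat.cast_sub hxy, ZMod.val_cast_of_lt hxy']
    have hk1 : 0 < b₁ - (x - y) := by omega
    have hk2 : b₁ - (x - y) < n := by omega
    have hrw : j₁ - (b₁ : ZMod n) - j₂ = -(((b₁ - (x - y)) : ℕ) : ZMod n) := by
      have h1 : ((b₁ - (x - y) : ℕ) : ZMod n)
          = (b₁ : ZMod n) - ((x - y : ℕ) : ZMod n) := Nat.cast_sub (by omega)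
      rw [h1, Nat.cast_sub hxy]
      push_cast
      linear_combination key
    have hvk : (((b₁ - (x - y)) : ℕ) : ZMod n).val = b₁ - (x - y) :=
      ZMod.val_cast_of_lt hk2
    have hnz : (((b₁ - (x - y)) : ℕ) : ZMod n) ≠ 0 := by
      rw [Ne, ← ZMod.val_eq_zero, hvk]; omega
    have hpre' : (j₁ - (b₁ : ZMod n) - j₂).val ≤ n / 2 := hpre
    rw [hrw, ZMod.neg_val, if_neg hnz, hvk] at hpre'
    omega
  · have hyx : y - x < n := by omega
    have hval : (j₁ - j₂).val = n - (y - x) := by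
      have h1 : ((y - x : ℕ) : ZMod n) = (y : ZMod n) - (x : ZMod n) :=
        Nat.cast_sub hxy.le
      have h2 : j₁ - j₂ = -(((y - x : ℕ)) : ZMod n) := by
        rw [h1]; linear_combination key
      have hnz : (((y - x : ℕ)) : ZMod n) ≠ 0 := by
        rw [Ne, ← ZMod.val_eq_zero, ZMod.val_cast_of_lt hyx]; omega
      rw [h2, ZMod.neg_val, if_neg hnz, ZMod.val_cast_of_lt hyx]
    omega
end

section
/- Let m ≥ 3 and n be integers with n ≥ (m+3)²/2 + 1. Consider n objects (red cycles) indexed by Z_n, and a symmetric 'crossing' relation among them such that each object crosses at most (m-1)/2 others. Then: (a) for each j ∈ Z_n there exists b with 0 < b ≤ (m+1)/2 such that R(j - b) does not cross R(j) (taking b(j) minimal such); (b) for each j there exists a with 0 < a ≤ (m+1)(m+3)/4 + 1 such that R(j + a) crosses none of R(j - b(j)), ..., R(j) (taking a(j) minimal such); and (c) b(j) + a(j) < n/2 for all j. -/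
/-- Combinatorial core of Proposition 13.  Given `m ≥ 3`, `n ≥ (m+3)²/2 + 1`, and a
symmetric crossing relation on `n` red cycles indexed by `ZMod n` in which each cycle
crosses at most `(m-1)/2` others, then for each `j` there are minimal `b(j)` and `a(j)`
with: `0 < b(j) ≤ (m+1)/2` and `R(j - b(j))` does not cross `R(j)`;
`0 < a(j) ≤ (m+1)(m+3)/4 + 1` and `R(j + a(j))` crosses none of
`R(j - b(j)), …, R(j)`; and `b(j) + a(j) < n/2`. -/
theorem stmt_11 (m n : ℕ) (hm : 3 ≤ m) (hn : 2 * n ≥ (m + 3) ^ 2 + 2)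
    (cross : ZMod n → ZMod n → Prop)
    (hsymm : ∀ j k, cross j k → cross k j)
    (hdeg : ∀ j, {k : ZMod n | cross j k ∧ k ≠ j}.ncard ≤ (m - 1) / 2) :
    ∀ j : ZMod n, ∃ b a : ℕ,
      -- (a): minimal b with 0 < b ≤ (m+1)/2 and R(j-b) not crossing R(j)
      (0 < b ∧ 2 * b ≤ m + 1 ∧ ¬ cross (j - (b : ZMod n)) j ∧
        (∀ b' : ℕ, 0 < b' → b' < b → cross (j - (b' : ZMod n)) j)) ∧
      -- (b): minimal a with 0 < a ≤ (m+1)(m+3)/4 + 1 and R(j+a) crossing none of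
      -- R(j-b), ..., R(j)
      (0 < a ∧ 4 * a ≤ (m + 1) * (m + 3) + 4 ∧
        (∀ c : ℕ, c ≤ b → ¬ cross (j - (c : ZMod n)) (j + (a : ZMod n))) ∧
        (∀ a' : ℕ, 0 < a' → a' < a →
          ∃ c : ℕ, c ≤ b ∧ cross (j - (c : ZMod n)) (j + (a' : ZMod n)))) ∧
      -- (c): b + a < n/2
      2 * (b + a) < n := by
  classical
  obtain ⟨M, hM⟩ : ∃ M, (m + 1) * (m + 3) = M := ⟨_, rfl⟩
  have hMge : 24 ≤ M := by
    have h1 : 4 * 6 ≤ (m + 1) * (m + 3) :=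
      Nat.mul_le_mul (by omega) (by omega)
    linarith [h1, hM.ge, hM.le]
  have hn' : 2 * n ≥ M + 2 * m + 8 := by
    have h : (m + 3) ^ 2 + 2 = M + 2 * m + 8 := by rw [← hM]; ring
    linarith [hn, h.le, h.ge]
  have hnpos : 0 < n := by omega
  haveI : NeZero n := ⟨by omega⟩
  set d := (m - 1) / 2 with hd
  have hcard : ∀ i : ZMod n,
      (Finset.univ.filter (fun k => cross i k ∧ k ≠ i)).card ≤ d := by
    intro i
    have h1 : {k : ZMod n | cross i k ∧ k ≠ i}
        = ↑(Finset.univ.filter (fun k => cross i k ∧ k ≠ i)) := by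
      ext k; simp
    have h2 := hdeg i
    rwa [h1, Set.ncard_coe_finset] at h2
  have hinj : ∀ x y : ℕ, x < n → y < n → (x : ZMod n) = (y : ZMod n) → x = y := by
    intro x y hx hy h
    have h2 := congrArg ZMod.val h
    rwa [ZMod.val_natCast_of_lt hx, ZMod.val_natCast_of_lt hy] at h2
  intro j
  have hdn : d + 1 < n := by omega
  -- existence of b
  have hexb : ∃ b, 0 < b ∧ b ≤ d + 1 ∧ ¬ cross (j - (b : ZMod n)) j := by
    by_contra hcon
    push_neg at hcon
    have hsub : (Finset.Icc 1 (d+1)).image (fun b : ℕ => j - (b : ZMod n))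
        ⊆ Finset.univ.filter (fun k => cross j k ∧ k ≠ j) := by
      intro k hk
      simp only [Finset.mem_image, Finset.mem_Icc] at hk
      obtain ⟨b, ⟨hb1, hb2⟩, rfl⟩ := hk
      refine Finset.mem_filter.2 ⟨Finset.mem_univ _, hsymm _ _ (hcon b hb1 hb2), ?_⟩
      intro heq
      have h0 : (b : ZMod n) = 0 := sub_eq_self.mp heq
      have hb0 : b = 0 := hinj b 0 (by omega) (by omega) (by simpa using h0)
      omega
    have hcardim : ((Finset.Icc 1 (d+1)).image (fun b : ℕ => j - (b : ZMod n))).card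
        = d + 1 := by
      rw [Finset.card_image_of_injOn, Nat.card_Icc]
      · omega
      · intro x hx y hy hxy
        simp only [Finset.coe_Icc, Set.mem_Icc] at hx hy
        have hxy' : (x : ZMod n) = (y : ZMod n) := sub_right_injective hxy
        exact hinj x y (by omega) (by omega) hxy'
    have h1 := Finset.card_le_card hsub
    have h2 := hcard j
    omega
  obtain ⟨b0, hb01, hb02, hb03⟩ := hexb
  have hPb : ∃ b : ℕ, 0 < b ∧ ¬ cross (j - (b : ZMod n)) j := ⟨b0, hb01, hb03⟩
  set b := Nat.find hPb with hbdef
  obtain ⟨hbpos, hbnc⟩ := Nat.find_spec hPb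
  have hble : b ≤ b0 := Nat.find_min' hPb ⟨hb01, hb03⟩
  have hb2 : 2 * b ≤ m + 1 := by omega
  have hbmin : ∀ b' : ℕ, 0 < b' → b' < b → cross (j - (b' : ZMod n)) j := by
    intro b' h1 h2
    by_contra hc
    exact Nat.find_min hPb h2 ⟨h1, hc⟩
  -- existence of a
  set A := (M + 4) / 4 with hA
  have hAn : A + b < n := by omega
  have hbd1 : (b + 1) * d < A := by
    have h1 : 4 * ((b + 1) * d) ≤ M := by
      have key : (2 * b + 2) * (2 * d) ≤ (m + 3) * (m + 1) :=
        Nat.mul_le_mul (by omega) (by omega)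
      nlinarith [key, hM.le, hM.ge]
    have h2 : M < 4 * A := by omega
    linarith
  have hexa : ∃ a, 0 < a ∧ a ≤ A ∧
      ∀ c : ℕ, c ≤ b → ¬ cross (j - (c : ZMod n)) (j + (a : ZMod n)) := by
    by_contra hcon
    push_neg at hcon
    set F := (Finset.range (b+1)).biUnion
      (fun c : ℕ => Finset.univ.filter
        (fun k => cross (j - (c : ZMod n)) k ∧ k ≠ j - (c : ZMod n))) with hF
    have hFcard : F.card ≤ (b + 1) * d := by
      refine le_trans Finset.card_biUnion_le ?_
      calc ∑ c ∈ Finset.range (b+1),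
            (Finset.univ.filter
              (fun k => cross (j - (c : ZMod n)) k ∧ k ≠ j - (c : ZMod n))).card
          ≤ ∑ _c ∈ Finset.range (b+1), d := Finset.sum_le_sum (fun c _ => hcard _)
        _ = (b + 1) * d := by simp [mul_comm]
    have hsub : (Finset.Icc 1 A).image (fun a : ℕ => j + (a : ZMod n)) ⊆ F := by
      intro k hk
      simp only [Finset.mem_image, Finset.mem_Icc] at hk
      obtain ⟨a, ⟨ha1, ha2⟩, rfl⟩ := hk
      obtain ⟨c, hc1, hc2⟩ := hcon a ha1 ha2
      refine Finset.mem_biUnion.2 ⟨c, Finset.mem_range.2 (by omega),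
        Finset.mem_filter.2 ⟨Finset.mem_univ _, hc2, ?_⟩⟩
      intro heq
      have h1 : (a : ZMod n) + (c : ZMod n) = 0 := by
        calc (a : ZMod n) + (c : ZMod n) = (j + (a : ZMod n)) - (j - (c : ZMod n)) := by
              ring
          _ = 0 := by rw [heq]; ring
      have h0 : ((a + c : ℕ) : ZMod n) = 0 := by push_cast; exact h1
      have := hinj (a + c) 0 (by omega) (by omega) (by simpa using h0)
      omega
    have hcardim : ((Finset.Icc 1 A).image (fun a : ℕ => j + (a : ZMod n))).card = A := by
      rw [Finset.card_image_of_injOn, Nat.card_Icc]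
      · omega
      · intro x hx y hy hxy
        simp only [Finset.coe_Icc, Set.mem_Icc] at hx hy
        have hxy' : (x : ZMod n) = (y : ZMod n) := add_left_cancel hxy
        exact hinj x y (by omega) (by omega) hxy'
    have h1 := Finset.card_le_card hsub
    linarith
  obtain ⟨a0, ha01, ha02, ha03⟩ := hexa
  have hPa : ∃ a : ℕ, 0 < a ∧
      ∀ c : ℕ, c ≤ b → ¬ cross (j - (c : ZMod n)) (j + (a : ZMod n)) := ⟨a0, ha01, ha03⟩
  set a := Nat.find hPa with hadef
  obtain ⟨hapos, hanc⟩ := Nat.find_spec hPa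
  have hale : a ≤ a0 := Nat.find_min' hPa ⟨ha01, ha03⟩
  have haA : a ≤ A := le_trans hale ha02
  have hamin : ∀ a' : ℕ, 0 < a' → a' < a →
      ∃ c : ℕ, c ≤ b ∧ cross (j - (c : ZMod n)) (j + (a' : ZMod n)) := by
    intro a' h1 h2
    have h3 := Nat.find_min hPa h2
    push_neg at h3
    obtain ⟨c, hc1, hc2⟩ := h3 h1
    exact ⟨c, hc1, hc2⟩
  refine ⟨b, a, ⟨hbpos, hb2, hbnc, hbmin⟩, ⟨hapos, ?_, hanc, hamin⟩, ?_⟩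
  · rw [hM]; omega
  · omega
end
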